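/- arXiv:2007.01119 — 3 statements merged into one kernel-verified Lean document; each statement's English description precedes it below -/
import Mathlib

section
/- Let T be a contraction on a Hilbert space H and f ∈ H. Define P_n(f) = ⟨T^n f, f⟩ for n ≥ 0 and P_n(f) = conjugate(P_{-n}(f)) for n < 0. Then the sequence (P_n(f))_{n∈ℤ} is non-negative definite, i.e., for any finitely supported complex sequence (c_n), ∑_{m,n} c_m conj(c_n) P_{m-n}(f) ≥ 0. -/
open scoped ComplexConjugate

/-- Telescoping sum over an integer interval. -/
lemma tele_aux (g : ℤ → ℂ) (a b : ℤ) (hab : a ≤ b) :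
    ∑ k ∈ Finset.Ico a b, (g k - g (k + 1)) = g a - g b := by
  obtain ⟨d, rfl⟩ : ∃ d : ℕ, b = a + d := ⟨(b - a).toNat, by omega⟩
  clear hab
  induction d with
  | zero => simp
  | succ d ih =>
      have hins : Finset.Ico a (a + ((d + 1 : ℕ) : ℤ)) =
          insert (a + (d : ℕ)) (Finset.Ico a (a + (d : ℕ))) := by
        ext y
        simp only [Finset.mem_Ico, Finset.mem_insert]
        push_cast
        omega
      rw [hins, Finset.sum_insert (by simp), ih]
      have harg : a + ((d + 1 : ℕ) : ℤ) = (a + (d : ℕ)) + 1 := by push_cast; ring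
      rw [harg]
      ring

/-- The spectral sequence `P_n(f) = ⟨T^n f, f⟩` (with `P_{-n} = conj (P_n)`) of a
contraction `T` on a Hilbert space is non-negative definite. -/
theorem stmt_0
    {H : Type*} [NormedAddCommGroup H] [InnerProductSpace ℂ H] [CompleteSpace H]
    (T : H →L[ℂ] H) (hT : ∀ f : H, ‖T f‖ ≤ ‖f‖)
    (f : H) (P : ℤ → ℂ)
    (hP0 : ∀ n : ℕ, P (n : ℤ) = inner ℂ ((T ^ n) f) f)
    (hPneg : ∀ n : ℤ, n < 0 → P n = conj (P (-n))) :
    ∀ (s : Finset ℤ) (c : ℤ → ℂ),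
      0 ≤ (∑ m ∈ s, ∑ n ∈ s, c m * conj (c n) * P (m - n)).re ∧
      (∑ m ∈ s, ∑ n ∈ s, c m * conj (c n) * P (m - n)).im = 0 := by
  intro s c
  rcases s.eq_empty_or_nonempty with rfl | hs
  · simp
  set N : ℤ := s.max' hs with hN
  set L : ℤ := s.min' hs with hL
  -- the family x k n = T^(k-n) f and the partial "dilation" vectors v k
  set x : ℤ → ℤ → H := fun k n => (T ^ (k - n).toNat) f with hx
  set v : ℤ → H := fun k => ∑ n ∈ s.filter (fun n => n ≤ k), c n • x k n with hv
  set A : ℤ → ℤ → ℤ → ℂ := fun k m n => (inner ℂ (x k n) (x k m) : ℂ) with hA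
  -- step: T maps x k n to x (k+1) n when n ≤ k
  have hxT : ∀ k n : ℤ, n ≤ k → T (x k n) = x (k + 1) n := by
    intro k n hnk
    have h1 : (k + 1 - n).toNat = (k - n).toNat + 1 := by omega
    simp only [hx, h1, pow_succ']
    rfl
  -- the quadratic form ⟪v k, v k⟫ expands to the double sum of A k
  have hvv : ∀ k : ℤ,
      (inner ℂ (v k) (v k) : ℂ) =
        ∑ m ∈ s.filter (fun n => n ≤ k), ∑ n ∈ s.filter (fun n => n ≤ k),
          c m * conj (c n) * A k m n := by
    intro k
    rw [hv]
    rw [sum_inner]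
    rw [Finset.sum_comm]
    refine Finset.sum_congr rfl fun m hm => ?_
    rw [inner_sum]
    refine Finset.sum_congr rfl fun n hn => ?_
    rw [inner_smul_left, inner_smul_right]
    ring
  -- similarly for T (v k)
  have hTvv : ∀ k : ℤ,
      (inner ℂ (T (v k)) (T (v k)) : ℂ) =
        ∑ m ∈ s.filter (fun n => n ≤ k), ∑ n ∈ s.filter (fun n => n ≤ k),
          c m * conj (c n) * A (k + 1) m n := by
    intro k
    have hTv : T (v k) = ∑ n ∈ s.filter (fun n => n ≤ k), c n • x (k + 1) n := by
      rw [hv, map_sum]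
      refine Finset.sum_congr rfl fun n hn => ?_
      rw [map_smul, hxT k n (Finset.mem_filter.mp hn).2]
    rw [hTv, sum_inner, Finset.sum_comm]
    refine Finset.sum_congr rfl fun m hm => ?_
    rw [inner_sum]
    refine Finset.sum_congr rfl fun n hn => ?_
    rw [inner_smul_left, inner_smul_right]
    ring
  -- per-pair telescoping identity
  have pair : ∀ m ∈ s, ∀ n ∈ s,
      P (m - n) = A N m n + ∑ k ∈ Finset.Ico (max m n) N, (A k m n - A (k + 1) m n) := by
    intro m hm n hn
    have hmN : m ≤ N := s.le_max' m hm
    have hnN : n ≤ N := s.le_max' n hn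
    rw [tele_aux (fun k => A k m n) (max m n) N (by omega)]
    have hbase : A (max m n) m n = P (m - n) := by
      rcases le_or_gt n m with h | h
      · have hmax : max m n = m := max_eq_left h
        have h0 : (m - m).toNat = 0 := by omega
        have h1 : ((m - n).toNat : ℤ) = m - n := by omega
        rw [hmax, hA]
        simp only [hx, h0, pow_zero, ContinuousLinearMap.one_apply]
        rw [show P (m - n) = P (((m - n).toNat : ℤ)) by rw [h1], hP0]
      · have hmax : max m n = n := max_eq_right h.le
        have h0 : (n - n).toNat = 0 := by omega
        have h1 : ((n - m).toNat : ℤ) = n - m := by omega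
        rw [hmax, hA]
        simp only [hx, h0, pow_zero, ContinuousLinearMap.one_apply]
        rw [← inner_conj_symm]
        rw [hPneg (m - n) (by omega)]
        have h2 : -(m - n) = n - m := by ring
        rw [h2, show P (n - m) = P (((n - m).toNat : ℤ)) by rw [h1], hP0]
    rw [hbase]
    ring
  -- the key identity
  have key : (∑ m ∈ s, ∑ n ∈ s, c m * conj (c n) * P (m - n)) =
      (inner ℂ (v N) (v N) : ℂ) +
        ∑ k ∈ Finset.Ico L N,
          ((inner ℂ (v k) (v k) : ℂ) - (inner ℂ (T (v k)) (T (v k)) : ℂ)) := by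
    have filN : s.filter (fun n => n ≤ N) = s :=
      Finset.filter_true_of_mem fun n hn => s.le_max' n hn
    have step1 : (∑ m ∈ s, ∑ n ∈ s, c m * conj (c n) * P (m - n)) =
        (∑ m ∈ s, ∑ n ∈ s, c m * conj (c n) * A N m n) +
          ∑ m ∈ s, ∑ n ∈ s, ∑ k ∈ Finset.Ico L N,
            (if m ≤ k ∧ n ≤ k then c m * conj (c n) * (A k m n - A (k + 1) m n) else 0) := by
      rw [← Finset.sum_add_distrib]
      refine Finset.sum_congr rfl fun m hm => ?_
      rw [← Finset.sum_add_distrib]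
      refine Finset.sum_congr rfl fun n hn => ?_
      rw [pair m hm n hn, mul_add]
      congr 1
      have hfil : Finset.Ico (max m n) N = (Finset.Ico L N).filter (fun k => m ≤ k ∧ n ≤ k) := by
        have hLm : L ≤ m := s.min'_le m hm
        have hLn : L ≤ n := s.min'_le n hn
        ext k
        simp only [Finset.mem_Ico, Finset.mem_filter]
        omega
      rw [hfil, Finset.sum_filter, Finset.mul_sum]
      refine Finset.sum_congr rfl fun k hk => ?_
      split <;> simp [mul_comm]
    have hvvN : (inner ℂ (v N) (v N) : ℂ) =
        ∑ m ∈ s, ∑ n ∈ s, c m * conj (c n) * A N m n := by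
      rw [hvv N, filN]
    have swap2 : ∀ k, (∑ m ∈ s, ∑ n ∈ s,
        (if m ≤ k ∧ n ≤ k then c m * conj (c n) * (A k m n - A (k + 1) m n) else 0)) =
        ((inner ℂ (v k) (v k) : ℂ) - (inner ℂ (T (v k)) (T (v k)) : ℂ)) := by
      intro k
      rw [hvv k, hTvv k, ← Finset.sum_sub_distrib]
      rw [Finset.sum_filter]
      refine Finset.sum_congr rfl fun m hm => ?_
      rw [← Finset.sum_sub_distrib, Finset.sum_filter]
      by_cases hmk : m ≤ k
      · simp only [hmk, if_true, true_and]
        refine Finset.sum_congr rfl fun n hn => ?_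
        by_cases hnk : n ≤ k
        · simp only [hnk, if_true]
          ring
        · simp [hnk]
      · simp [hmk]
    rw [step1]
    congr 1
    · exact hvvN.symm
    calc (∑ m ∈ s, ∑ n ∈ s, ∑ k ∈ Finset.Ico L N,
            (if m ≤ k ∧ n ≤ k then c m * conj (c n) * (A k m n - A (k + 1) m n) else 0))
        = ∑ m ∈ s, ∑ k ∈ Finset.Ico L N, ∑ n ∈ s,
            (if m ≤ k ∧ n ≤ k then c m * conj (c n) * (A k m n - A (k + 1) m n) else 0) :=
          Finset.sum_congr rfl fun m _ => Finset.sum_comm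
      _ = ∑ k ∈ Finset.Ico L N, ∑ m ∈ s, ∑ n ∈ s,
            (if m ≤ k ∧ n ≤ k then c m * conj (c n) * (A k m n - A (k + 1) m n) else 0) :=
          Finset.sum_comm
      _ = ∑ k ∈ Finset.Ico L N,
            ((inner ℂ (v k) (v k) : ℂ) - (inner ℂ (T (v k)) (T (v k)) : ℂ)) :=
          Finset.sum_congr rfl fun k _ => swap2 k
  -- convert to a real expression and conclude
  have hsum : (∑ m ∈ s, ∑ n ∈ s, c m * conj (c n) * P (m - n)) =
      (((‖v N‖ ^ 2 + ∑ k ∈ Finset.Ico L N, (‖v k‖ ^ 2 - ‖T (v k)‖ ^ 2) : ℝ)) : ℂ) := by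
    rw [key]
    simp only [inner_self_eq_norm_sq_to_K]
    push_cast
    norm_num
  have hnn : 0 ≤ ‖v N‖ ^ 2 + ∑ k ∈ Finset.Ico L N, (‖v k‖ ^ 2 - ‖T (v k)‖ ^ 2) := by
    refine add_nonneg (sq_nonneg _) (Finset.sum_nonneg fun k _ => sub_nonneg.mpr ?_)
    exact pow_le_pow_left₀ (norm_nonneg _) (hT (v k)) 2
  constructor
  · rw [hsum, Complex.ofReal_re]
    exact hnn
  · rw [hsum, Complex.ofReal_im]
end

section
/- Let 0 < δ < 1. There exists a constant C = C(δ) such that for all integers N ≥ 2 and all real θ, |∑_{k=1}^{N} e^{2iπ(k^δ + θk)}| ≤ C N^{1−δ/2}. -/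
open Real Complex Finset

private lemma aux_alg (c s : ℂ) (hs' : s ≠ 0) (hcs : s^2 + c^2 = 1) :
    ((c + s*Complex.I) * (c + s*Complex.I) - 1) * (-(1/2) - Complex.I/2 * (c/s)) = 1 := by
  have hI : Complex.I^2 = -1 := Complex.I_sq
  field_simp
  linear_combination (s - c*Complex.I) * hcs +
    (-s^3 - c*s^2*Complex.I - 2*c^2*s) * hI

private lemma cot_id (t : ℝ) (hs : Real.sin (π * t) ≠ 0) :
    (Complex.exp (2 * π * Complex.I * t) - 1) *
      (-(1/2) - Complex.I/2 * ((Real.cos (π*t) / Real.sin (π*t) : ℝ) : ℂ)) = 1 := by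
  have h1 : (2 * π * Complex.I * t : ℂ) = (↑(π*t)) * Complex.I + (↑(π*t)) * Complex.I := by
    push_cast; ring
  rw [h1, Complex.exp_add, Complex.exp_mul_I, Complex.ofReal_div, Complex.ofReal_cos,
    Complex.ofReal_sin]
  exact aux_alg _ _ (by rwa [← Complex.ofReal_sin, Complex.ofReal_ne_zero])
    (Complex.sin_sq_add_cos_sq _)

private lemma sin_lb {Δ t : ℝ} (h0 : 0 < Δ) (h1 : Δ ≤ t) (h2 : t ≤ 1 - Δ) :
    2*Δ ≤ Real.sin (π * t) := by
  have hπ := Real.pi_pos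
  rcases le_or_gt t (1/2) with h | h
  · calc 2*Δ ≤ 2*t := by linarith
    _ = 2/π * (π * t) := by field_simp
    _ ≤ Real.sin (π * t) := Real.mul_le_sin (by nlinarith) (by nlinarith)
  · have key : Real.sin (π * t) = Real.sin (π * (1 - t)) := by
      rw [show π * (1-t) = π - π * t by ring, Real.sin_pi_sub]
    rw [key]
    calc 2*Δ ≤ 2*(1-t) := by linarith
    _ = 2/π * (π * (1-t)) := by field_simp
    _ ≤ Real.sin (π * (1-t)) := Real.mul_le_sin (by nlinarith) (by nlinarith)

private lemma sin_pos' {Δ t : ℝ} (h0 : 0 < Δ) (h1 : Δ ≤ t) (h2 : t ≤ 1 - Δ) :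
    0 < Real.sin (π * t) := lt_of_lt_of_le (by linarith) (sin_lb h0 h1 h2)

private lemma cot_mono {Δ t t' : ℝ} (h0 : 0 < Δ) (h1 : Δ ≤ t') (h12 : t' ≤ t) (h2 : t ≤ 1 - Δ) :
    Real.cos (π * t) / Real.sin (π * t) ≤ Real.cos (π * t') / Real.sin (π * t') := by
  have hs := sin_pos' h0 (h1.trans h12) h2
  have hs' := sin_pos' h0 h1 (h12.trans h2)
  rw [div_le_div_iff₀ hs hs']
  have : Real.sin (π * t - π * t') = Real.sin (π*t) * Real.cos (π*t') -
      Real.cos (π*t) * Real.sin (π*t') := Real.sin_sub _ _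
  have hpos : 0 ≤ Real.sin (π * t - π * t') := by
    apply Real.sin_nonneg_of_nonneg_of_le_pi
    · nlinarith [Real.pi_pos]
    · nlinarith [Real.pi_pos]
  linarith [this ▸ hpos]

private lemma cot_abs {Δ t : ℝ} (h0 : 0 < Δ) (h1 : Δ ≤ t) (h2 : t ≤ 1 - Δ) :
    |Real.cos (π * t) / Real.sin (π * t)| ≤ 1/(2*Δ) := by
  have hs := sin_pos' h0 h1 h2
  have hlb := sin_lb h0 h1 h2
  rw [abs_div, abs_of_pos hs]
  exact div_le_div₀ (by norm_num) (Real.abs_cos_le_one _) (by linarith) hlb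

private lemma norm_ee (x : ℝ) : ‖Complex.exp (2 * π * Complex.I * x)‖ = 1 := by
  rw [show (2 * π * Complex.I * x : ℂ) = (2 * π * x : ℝ) * Complex.I by push_cast; ring]
  exact Complex.norm_exp_ofReal_mul_I _

private lemma tele (c : ℕ → ℝ) {A B : ℕ} (h : A ≤ B) :
    ∑ n ∈ Finset.Ico A B, (c (n+1) - c n) = c B - c A := by
  induction B, h using Nat.le_induction with
  | base => simp
  | succ B hAB ih => rw [Finset.sum_Ico_succ_top (by omega), ih]; ring

-- Abel summation identity

private lemma abel (E w : ℕ → ℂ) (A B : ℕ)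
    (hstep : ∀ n, A ≤ n → n < B → (E (n+1) - E n) * w n = E n) :
    ∀ k, A ≤ k → k + 1 ≤ B →
      ∑ n ∈ Finset.Icc A (k+1), E n =
        E (k+1) + E (k+1) * w k - E A * w A +
          ∑ n ∈ Finset.Ico A k, E (n+1) * (w n - w (n+1)) := by
  intro k hk
  induction k, hk using Nat.le_induction with
  | base =>
    intro hB
    rw [Finset.sum_Icc_succ_top (by omega), Finset.Icc_self, Finset.sum_singleton]
    simp only [Finset.Ico_self, Finset.sum_empty]
    linear_combination -hstep A le_rfl (by omega)
  | succ k hAk ih =>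
    intro hB
    rw [Finset.sum_Icc_succ_top (by omega), ih (by omega),
      Finset.sum_Ico_succ_top (by omega)]
    linear_combination -hstep (k+1) (by omega) (by omega)


private lemma KL (f g : ℝ → ℝ) (A B : ℕ) (m : ℤ) (Δ : ℝ) (hΔ : 0 < Δ)
    (hf : ∀ x ∈ Set.Icc (A:ℝ) B, HasDerivAt f (g x) x)
    (hg : AntitoneOn g (Set.Icc (A:ℝ) B))
    (hlo : ∀ x ∈ Set.Icc (A:ℝ) B, (m:ℝ) + Δ ≤ g x)
    (hhi : ∀ x ∈ Set.Icc (A:ℝ) B, g x ≤ (m:ℝ) + 1 - Δ) :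
    ‖∑ n ∈ Finset.Icc A B, Complex.exp (2*π*Complex.I*(f n))‖ ≤ 2 + 1/Δ := by
  have hΔinv : (0:ℝ) < 1/Δ := by positivity
  rcases lt_or_ge B A with hBA | hAB
  · rw [Finset.Icc_eq_empty (by exact_mod_cast Nat.not_le.mpr hBA)]
    simp only [Finset.sum_empty, norm_zero]
    positivity
  rcases eq_or_lt_of_le hAB with rfl | hAB'
  · rw [Finset.Icc_self, Finset.sum_singleton, norm_ee]; linarith
  -- now A < B
  set E : ℕ → ℂ := fun n => Complex.exp (2*π*Complex.I*(f n)) with hE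
  set t : ℕ → ℝ := fun n => f (n+1) - f n - m with ht
  have hABr : (A:ℝ) < B := by exact_mod_cast hAB'
  -- MVT facts
  have key : ∀ n, A ≤ n → n < B → ∃ ξ, (n:ℝ) < ξ ∧ ξ < (n:ℝ)+1 ∧ g ξ = f ((n:ℝ)+1) - f n := by
    intro n hAn hnB
    have h1 : ((n:ℝ)) < (n:ℝ)+1 := by linarith
    have hsub : Set.Icc (n:ℝ) ((n:ℝ)+1) ⊆ Set.Icc (A:ℝ) B := by
      apply Set.Icc_subset_Icc
      · exact_mod_cast hAn
      · have : (n:ℝ)+1 ≤ B := by exact_mod_cast Nat.succ_le_of_lt hnB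
        linarith
    obtain ⟨c, hc, hceq⟩ := exists_hasDerivAt_eq_slope f g h1
      (fun x hx => (hf x (hsub hx)).continuousAt.continuousWithinAt)
      (fun x hx => hf x (hsub (Set.Ioo_subset_Icc_self hx)))
    exact ⟨c, hc.1, hc.2, by rw [hceq]; ring⟩
  have hmemBξ : ∀ n, A ≤ n → n < B → ∀ ξ, (n:ℝ) < ξ → ξ < (n:ℝ)+1 → ξ ∈ Set.Icc (A:ℝ) B := by
    intro n hAn hnB ξ h1 h2
    have hnB' : (n:ℝ)+1 ≤ B := by exact_mod_cast Nat.succ_le_of_lt hnB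
    have hAn' : (A:ℝ) ≤ n := by exact_mod_cast hAn
    exact ⟨by linarith, by linarith⟩
  have ht_cast : ∀ n : ℕ, f ((n:ℝ)+1) = f ((n+1 : ℕ):ℝ) := by intro n; norm_num
  have ht_mem : ∀ n, A ≤ n → n < B → Δ ≤ t n ∧ t n ≤ 1 - Δ := by
    intro n hAn hnB
    obtain ⟨ξ, h1, h2, h3⟩ := key n hAn hnB
    have hmem := hmemBξ n hAn hnB ξ h1 h2
    have e1 := hlo ξ hmem
    have e2 := hhi ξ hmem
    have heq : t n = g ξ - m := by simp only [ht]; rw [h3]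
    constructor <;> linarith [heq]
  have ht_anti : ∀ n n', A ≤ n → n ≤ n' → n' < B → t n' ≤ t n := by
    intro n n' hAn hnn' hn'B
    rcases eq_or_lt_of_le hnn' with rfl | hlt
    · exact le_refl _
    obtain ⟨ξ, h1, h2, h3⟩ := key n hAn (lt_of_le_of_lt (Nat.le_of_lt hlt) hn'B)
    obtain ⟨ξ', h1', h2', h3'⟩ := key n' (le_trans hAn hnn') hn'B
    have hmem := hmemBξ n hAn (lt_of_le_of_lt (Nat.le_of_lt hlt) hn'B) ξ h1 h2
    have hmem' := hmemBξ n' (le_trans hAn hnn') hn'B ξ' h1' h2'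
    have hξξ' : ξ ≤ ξ' := by
      have : ((n:ℝ))+1 ≤ (n':ℝ) := by exact_mod_cast Nat.succ_le_of_lt hlt
      linarith
    have := hg hmem hmem' hξξ'
    have e1 : t n = g ξ - m := by simp only [ht]; rw [h3]
    have e2 : t n' = g ξ' - m := by simp only [ht]; rw [h3']
    linarith
  set c : ℕ → ℝ := fun n => Real.cos (π * t n) / Real.sin (π * t n) with hcdef
  set w : ℕ → ℂ := fun n => -(1/2) - Complex.I/2 * (c n : ℝ) with hwdef
  have hΔhalf : Δ ≤ 1/2 := by
    have := ht_mem A le_rfl hAB'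
    linarith [this.1, this.2]
  have hstep : ∀ n, A ≤ n → n < B → (E (n+1) - E n) * w n = E n := by
    intro n hAn hnB
    obtain ⟨h1, h2⟩ := ht_mem n hAn hnB
    have hsin : Real.sin (π * t n) ≠ 0 := (sin_pos' hΔ h1 h2).ne'
    have hfval : f ((↑(n+1)):ℝ) = f ↑n + t n + m := by simp only [ht]; push_cast; ring
    have hsplit : E (n+1) = E n * Complex.exp (2*π*Complex.I*(t n)) := by
      rw [hE]; simp only
      rw [hfval]
      have harg : (2*π*Complex.I * ((f ↑n + t n + (m:ℝ) : ℝ):ℂ)) =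
          2*π*Complex.I*((f ↑n : ℝ):ℂ) + 2*π*Complex.I*((t n : ℝ):ℂ) + (m:ℂ)*(2*π*Complex.I) := by
        push_cast; ring
      rw [harg, Complex.exp_add, Complex.exp_add, Complex.exp_int_mul_two_pi_mul_I, mul_one]
    have hcot := cot_id (t n) hsin
    calc (E (n+1) - E n) * w n
        = E n * ((Complex.exp (2*π*Complex.I*(t n)) - 1) *
            (-(1/2) - Complex.I/2 * ((Real.cos (π * t n) / Real.sin (π * t n) : ℝ) : ℂ))) := by
          rw [hsplit, hwdef]; simp only [hcdef]; ring
      _ = E n := by rw [hcot, mul_one]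
  obtain ⟨K, rfl, hAK⟩ : ∃ K, B = K + 1 ∧ A ≤ K := ⟨B - 1, by omega, by omega⟩
  have habel := abel E w A (K+1) hstep K hAK le_rfl
  rw [habel]
  have hnormE : ∀ n : ℕ, ‖E n‖ = 1 := fun n => norm_ee (f n)
  have hcb : ∀ n, A ≤ n → n < K + 1 → |c n| ≤ 1/(2*Δ) := by
    intro n h1 h2
    obtain ⟨e1, e2⟩ := ht_mem n h1 h2
    exact cot_abs hΔ e1 e2
  have hwb : ∀ n, A ≤ n → n < K + 1 → ‖w n‖ ≤ 1/2 + 1/(4*Δ) := by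
    intro n h1 h2
    rw [hwdef]; simp only
    have hv1 : ‖(-(1/2) : ℂ)‖ = 1/2 := by norm_num
    have hv2 : ‖Complex.I/2 * ((c n : ℝ):ℂ)‖ = |c n|/2 := by
      rw [norm_mul, Complex.norm_real, Real.norm_eq_abs]
      have : ‖(Complex.I/2 : ℂ)‖ = 1/2 := by
        rw [norm_div, Complex.norm_I]; norm_num
      rw [this]; ring
    calc ‖-(1/2) - Complex.I/2 * ((c n : ℝ):ℂ)‖
        ≤ ‖(-(1/2) : ℂ)‖ + ‖Complex.I/2 * ((c n : ℝ):ℂ)‖ := norm_sub_le _ _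
      _ = 1/2 + |c n|/2 := by rw [hv1, hv2]
      _ ≤ 1/2 + 1/(4*Δ) := by
          have h := hcb n h1 h2
          have : |c n|/2 ≤ 1/(4*Δ) := by
            rw [show (1:ℝ)/(4*Δ) = (1/(2*Δ))/2 by ring]; linarith
          linarith
  have hcmono : ∀ n, A ≤ n → n + 1 < K + 1 → c n ≤ c (n+1) := by
    intro n h1 h2
    obtain ⟨e1, e2⟩ := ht_mem n h1 (by omega)
    obtain ⟨e1', e2'⟩ := ht_mem (n+1) (by omega) h2
    exact cot_mono hΔ e1' (ht_anti n (n+1) h1 (by omega) h2) e2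
  have hsumb : ∑ n ∈ Finset.Ico A K, ‖E (n+1) * (w n - w (n+1))‖ ≤ (c K - c A)/2 := by
    have heach : ∀ n ∈ Finset.Ico A K, ‖E (n+1) * (w n - w (n+1))‖ = (c (n+1) - c n)/2 := by
      intro n hn
      rw [Finset.mem_Ico] at hn
      have hdiff : w n - w (n+1) = Complex.I/2 * (((c (n+1) : ℝ):ℂ) - ((c n : ℝ):ℂ)) := by
        rw [hwdef]; simp only; ring
      rw [norm_mul, hnormE, one_mul, hdiff, norm_mul, ← Complex.ofReal_sub,
        Complex.norm_real, Real.norm_eq_abs,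
        _root_.abs_of_nonneg (by linarith [hcmono n hn.1 (by omega)] : (0:ℝ) ≤ c (n+1) - c n)]
      have : ‖(Complex.I/2 : ℂ)‖ = 1/2 := by rw [norm_div, Complex.norm_I]; norm_num
      rw [this]; ring
    rw [Finset.sum_congr rfl heach, ← Finset.sum_div, tele c (show A ≤ K from hAK)]
  have hcA := hcb A le_rfl (by omega)
  have hcK := hcb K hAK (by omega)
  have habs_cA := abs_le.mp hcA
  have habs_cK := abs_le.mp hcK
  calc ‖E (K+1) + E (K+1) * w K - E A * w A + ∑ n ∈ Finset.Ico A K, E (n+1) * (w n - w (n+1))‖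
      ≤ ‖E (K+1) + E (K+1) * w K - E A * w A‖ +
          ‖∑ n ∈ Finset.Ico A K, E (n+1) * (w n - w (n+1))‖ := norm_add_le _ _
    _ ≤ (‖E (K+1)‖ + ‖E (K+1) * w K‖ + ‖E A * w A‖) +
          ∑ n ∈ Finset.Ico A K, ‖E (n+1) * (w n - w (n+1))‖ := by
        gcongr
        · exact (norm_sub_le _ _).trans (by gcongr; exact norm_add_le _ _)
        · exact norm_sum_le _ _
    _ ≤ (1 + (1/2 + 1/(4*Δ)) + (1/2 + 1/(4*Δ))) + (c K - c A)/2 := by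
        have b1 : ‖E (K+1)‖ ≤ 1 := le_of_eq (hnormE _)
        have b2 : ‖E (K+1) * w K‖ ≤ 1/2 + 1/(4*Δ) := by
          rw [norm_mul, hnormE, one_mul]; exact hwb K hAK (by omega)
        have b3 : ‖E A * w A‖ ≤ 1/2 + 1/(4*Δ) := by
          rw [norm_mul, hnormE, one_mul]; exact hwb A le_rfl (by omega)
        exact add_le_add (add_le_add (add_le_add b1 b2) b3) hsumb
    _ ≤ 2 + 1/Δ := by
        have h1 : c K ≤ 1/(2*Δ) := habs_cK.2
        have h2 : -(1/(2*Δ)) ≤ c A := habs_cA.1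
        have e1 : 1/(4*Δ) = (1/4) * (1/Δ) := by ring
        have e2 : 1/(2*Δ) = (1/2) * (1/Δ) := by ring
        rw [e1] at *
        linarith [e2 ▸ h1, e2 ▸ h2]


set_option maxHeartbeats 1000000

/-- For `0 < δ < 1`, `|∑_{k=1}^N e^{2iπ(k^δ + θk)}| ≤ C N^{1−δ/2}` uniformly in `θ`. -/
theorem stmt_13 (δ : ℝ) (hδ0 : 0 < δ) (hδ1 : δ < 1) :
    ∃ C > 0, ∀ N : ℕ, 2 ≤ N → ∀ θ : ℝ,
      ‖∑ k ∈ Finset.Icc 1 N,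
          Complex.exp (2 * Real.pi * Complex.I * (((k : ℝ) ^ δ + θ * k : ℝ) : ℂ))‖
        ≤ C * (N : ℝ) ^ (1 - δ / 2) := by
  have h1δ : 0 < 1 - δ := by linarith
  refine ⟨7 + 2/(δ*(1-δ)) + 2/(1-δ),
    by positivity, ?_⟩
  intro N hN2 θ
  classical
  set f : ℝ → ℝ := fun x => x ^ δ + θ * x with hfdef
  set g : ℝ → ℝ := fun x => δ * x ^ (δ - 1) + θ with hgdef
  have hN0 : (0:ℝ) < N := by positivity
  have hNr : (1:ℝ) ≤ (N:ℝ) := by exact_mod_cast Nat.one_le_of_lt hN2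
  have hone : (1:ℝ) ≤ (N:ℝ)^(1-δ/2) := by
    calc (1:ℝ) = (N:ℝ)^(0:ℝ) := (Real.rpow_zero _).symm
    _ ≤ (N:ℝ)^(1-δ/2) := Real.rpow_le_rpow_of_exponent_le hNr (by linarith)
  have hf : ∀ x : ℝ, 1 ≤ x → HasDerivAt f (g x) x := by
    intro x hx
    have h1 : HasDerivAt (fun y : ℝ => y ^ δ) (δ * x^(δ-1)) x :=
      Real.hasDerivAt_rpow_const (Or.inl (by linarith))
    have h2 : HasDerivAt (fun y : ℝ => θ * y) θ x := by
      simpa using (hasDerivAt_id x).const_mul θ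
    show HasDerivAt (fun x => x ^ δ + θ * x) (δ * x ^ (δ - 1) + θ) x
    exact h1.add h2
  have hg' : ∀ x : ℝ, 0 < x → HasDerivAt g (δ*((δ-1)*x^(δ-2))) x := by
    intro x hx
    have h1 : HasDerivAt (fun y : ℝ => y ^ (δ-1)) ((δ-1) * x^(δ-1-1)) x :=
      Real.hasDerivAt_rpow_const (Or.inl hx.ne')
    have := (h1.const_mul δ).add_const θ
    simpa [hgdef, show δ-1-1 = δ-2 by ring] using this
  have hganti : AntitoneOn g (Set.Icc (1:ℝ) N) := by
    intro x hx y hy hxy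
    have hx0 : (0:ℝ) < x := by linarith [hx.1]
    have := Real.rpow_le_rpow_of_nonpos hx0 hxy (by linarith : δ - 1 ≤ 0)
    simp only [hgdef]
    have := mul_le_mul_of_nonneg_left this hδ0.le
    linarith
  set Δ : ℝ := (N:ℝ)^(δ/2-1) with hΔdef
  have hΔpos : 0 < Δ := Real.rpow_pos_of_pos hN0 _
  -- trivial bound for the sum
  have htriv : ‖∑ n ∈ Finset.Icc 1 N, Complex.exp (2*π*Complex.I*(f n))‖ ≤ (N:ℝ) := by
    calc ‖∑ n ∈ Finset.Icc 1 N, Complex.exp (2*π*Complex.I*(f n))‖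
        ≤ ∑ n ∈ Finset.Icc 1 N, ‖Complex.exp (2*π*Complex.I*(f n))‖ := norm_sum_le _ _
      _ = ∑ n ∈ Finset.Icc 1 N, 1 := by
          exact Finset.sum_congr rfl fun n _ => norm_ee _
      _ = (N:ℝ) := by rw [Finset.sum_const, Nat.card_Icc]; simp
  have hgoal_eq : (∑ k ∈ Finset.Icc 1 N,
      Complex.exp (2 * Real.pi * Complex.I * (((k : ℝ) ^ δ + θ * k : ℝ) : ℂ))) =
      ∑ n ∈ Finset.Icc 1 N, Complex.exp (2*π*Complex.I*(f n)) := rfl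
  rw [hgoal_eq]
  by_cases hsmall : 2*Δ ≤ 1 - δ
  swap
  · -- N small: trivial bound suffices
    push_neg at hsmall
    have h1 : Δ ≤ (N:ℝ)^(-(1/2) : ℝ) :=
      Real.rpow_le_rpow_of_exponent_le hNr (by linarith)
    have h2 : (N:ℝ)^(-(1/2) : ℝ) = ((N:ℝ)^((1:ℝ)/2))⁻¹ := by
      rw [← Real.rpow_neg hN0.le]
    have hhalfpos : (0:ℝ) < (N:ℝ)^((1:ℝ)/2) := Real.rpow_pos_of_pos hN0 _
    have h3 : (N:ℝ)^((1:ℝ)/2) < 2/(1-δ) := by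
      rw [h2] at h1
      have : (1-δ)/2 < ((N:ℝ)^((1:ℝ)/2))⁻¹ := by linarith
      rw [lt_inv_comm₀ (by positivity) hhalfpos] at this
      calc (N:ℝ)^((1:ℝ)/2) < ((1-δ)/2)⁻¹ := this
        _ = 2/(1-δ) := by rw [inv_div]
    have h4 : (N:ℝ) = (N:ℝ)^((1:ℝ)/2) * (N:ℝ)^((1:ℝ)/2) := by
      rw [← Real.rpow_add hN0]; norm_num
    have h5 : (N:ℝ)^((1:ℝ)/2) ≤ (N:ℝ)^(1-δ/2) :=
      Real.rpow_le_rpow_of_exponent_le hNr (by linarith)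
    have h6 : (0:ℝ) ≤ 2/(δ*(1-δ)) := by positivity
    calc ‖∑ n ∈ Finset.Icc 1 N, Complex.exp (2*π*Complex.I*(f n))‖ ≤ (N:ℝ) := htriv
      _ = (N:ℝ)^((1:ℝ)/2) * (N:ℝ)^((1:ℝ)/2) := h4
      _ ≤ (2/(1-δ)) * (N:ℝ)^(1-δ/2) := by nlinarith
      _ ≤ (7 + 2/(δ*(1-δ)) + 2/(1-δ)) * (N:ℝ)^(1-δ/2) := by nlinarith
  -- main case
  set lam : ℝ := δ*(1-δ)*(N:ℝ)^(δ-2) with hlamdef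
  have hlampos : 0 < lam := by
    have := Real.rpow_pos_of_pos hN0 (δ-2)
    positivity
  have hΔhalf : Δ ≤ 1/2 := by linarith
  set v₀ : ℝ := g N with hv0def
  set k : ℤ := ⌈v₀ - Δ⌉ with hkdef
  have hk1 : v₀ - Δ ≤ (k:ℝ) := Int.le_ceil _
  have hk2 : (k:ℝ) < v₀ - Δ + 1 := Int.ceil_lt_add_one _
  have hNmem : (N:ℝ) ∈ Set.Icc (1:ℝ) N := ⟨hNr, le_rfl⟩
  have hval : ∀ x ∈ Set.Icc (1:ℝ) (N:ℝ), v₀ ≤ g x ∧ g x ≤ v₀ + δ := by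
    intro x hx
    constructor
    · exact hganti hx hNmem hx.2
    · have hupper : g x ≤ g 1 := hganti (Set.left_mem_Icc.mpr hNr) hx hx.1
      have hg1 : g 1 = δ + θ := by simp [hgdef, Real.one_rpow]
      have hv0θ : θ ≤ v₀ := by
        have : (0:ℝ) ≤ (N:ℝ)^(δ-1) := Real.rpow_nonneg hN0.le _
        simp only [hv0def, hgdef]
        nlinarith
      rw [hg1] at hupper
      linarith
  set a : ℕ := Nat.findGreatest (fun n => 1 ≤ n ∧ (k:ℝ) + Δ < g n) N with hadef
  set b : ℕ := Nat.findGreatest (fun n => 1 ≤ n ∧ (k:ℝ) - Δ ≤ g n) N with hbdef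
  have ha_g : ∀ n, a < n → n ≤ N → ¬(1 ≤ n ∧ (k:ℝ) + Δ < g n) := by
    intro n h1 h2
    rw [hadef] at h1
    exact Nat.findGreatest_is_greatest h1 h2
  have hb_g : ∀ n, b < n → n ≤ N → ¬(1 ≤ n ∧ (k:ℝ) - Δ ≤ g n) := by
    intro n h1 h2
    rw [hbdef] at h1
    exact Nat.findGreatest_is_greatest h1 h2
  have hab : a ≤ b :=
    Nat.findGreatest_mono (fun n hn => ⟨hn.1, by linarith [hn.2]⟩) le_rfl
  have haN : a ≤ N := Nat.findGreatest_le N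
  have hbN : b ≤ N := Nat.findGreatest_le N
  have hsplit : ∑ n ∈ Finset.Icc 1 N, Complex.exp (2*π*Complex.I*(f n)) =
      (∑ n ∈ Finset.Ico 1 (a+1), Complex.exp (2*π*Complex.I*(f n)) +
       ∑ n ∈ Finset.Ico (a+1) (b+1), Complex.exp (2*π*Complex.I*(f n))) +
       ∑ n ∈ Finset.Ico (b+1) (N+1), Complex.exp (2*π*Complex.I*(f n)) := by
    rw [← Finset.Ico_add_one_right_eq_Icc,
      Finset.sum_Ico_consecutive _ (by omega : 1 ≤ a+1) (by omega : a+1 ≤ b+1),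
      Finset.sum_Ico_consecutive _ (by omega : 1 ≤ b+1) (by omega : b+1 ≤ N+1)]
  -- piece 1
  have hS1 : ‖∑ n ∈ Finset.Ico 1 (a+1), Complex.exp (2*π*Complex.I*(f n))‖ ≤ 2 + 1/Δ := by
    rw [Finset.Ico_add_one_right_eq_Icc]
    rcases Nat.eq_zero_or_pos a with ha0 | hapos
    · rw [ha0, Finset.Icc_eq_empty (by omega), Finset.sum_empty, norm_zero]
      positivity
    · have hPa : 1 ≤ a ∧ (k:ℝ) + Δ < g a :=
        Nat.findGreatest_of_ne_zero hadef.symm hapos.ne'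
      have har : (1:ℝ) ≤ (a:ℝ) := by exact_mod_cast hPa.1
      have haNr : (a:ℝ) ≤ (N:ℝ) := by exact_mod_cast haN
      have hsub : Set.Icc (((1:ℕ)):ℝ) (a:ℝ) ⊆ Set.Icc (1:ℝ) (N:ℝ) := by
        intro x hx
        exact ⟨by simpa using hx.1, hx.2.trans haNr⟩
      refine KL f g 1 a k Δ hΔpos ?_ (hganti.mono hsub) ?_ ?_
      · intro x hx
        exact hf x (by simpa using hx.1)
      · intro x hx
        have hxm : x ∈ Set.Icc (1:ℝ) (N:ℝ) := hsub hx
        have ham : (a:ℝ) ∈ Set.Icc (1:ℝ) (N:ℝ) := ⟨har, haNr⟩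
        have : g a ≤ g x := hganti hxm ham hx.2
        linarith [hPa.2]
      · intro x hx
        have hxm : x ∈ Set.Icc (1:ℝ) (N:ℝ) := hsub hx
        have := (hval x hxm).2
        linarith
  -- piece 3
  have hS3 : ‖∑ n ∈ Finset.Ico (b+1) (N+1), Complex.exp (2*π*Complex.I*(f n))‖ ≤ 2 + 1/Δ := by
    rw [Finset.Ico_add_one_right_eq_Icc]
    rcases eq_or_lt_of_le hbN with hbeq | hbltN
    · rw [Finset.Icc_eq_empty (by omega), Finset.sum_empty, norm_zero]
      positivity
    · have hnotP := hb_g (b+1) (by omega) (by omega)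
      have hgb1 : g ((b:ℝ)+1) < (k:ℝ) - Δ := by
        push_neg at hnotP
        have := hnotP (by omega)
        push_cast at this
        linarith
      have hb0 : (0:ℝ) ≤ (b:ℝ) := Nat.cast_nonneg b
      have hbNr : (b:ℝ)+1 ≤ (N:ℝ) := by exact_mod_cast hbltN
      have hmem : ∀ x : ℝ, x ∈ Set.Icc ((↑(b+1)):ℝ) (N:ℝ) →
          x ∈ Set.Icc (1:ℝ) (N:ℝ) ∧ (b:ℝ)+1 ≤ x := by
        intro x hx
        simp only [Nat.cast_add, Nat.cast_one] at hx
        exact ⟨⟨by linarith [hx.1], hx.2⟩, hx.1⟩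
      refine KL f g (b+1) N (k-1) Δ hΔpos ?_ ?_ ?_ ?_
      · intro x hx
        exact hf x (by linarith [(hmem x hx).1.1])
      · intro x hx y hy hxy
        exact hganti (hmem x hx).1 (hmem y hy).1 hxy
      · intro x hx
        have := (hval x (hmem x hx).1).1
        push_cast
        linarith
      · intro x hx
        obtain ⟨hxm, hxb⟩ := hmem x hx
        have hbm : ((b:ℝ)+1) ∈ Set.Icc (1:ℝ) (N:ℝ) := ⟨by linarith, hbNr⟩
        have hmono : g x ≤ g ((b:ℝ)+1) := hganti hbm hxm hxb
        push_cast
        linarith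
  -- piece 2
  have hS2 : ‖∑ n ∈ Finset.Ico (a+1) (b+1), Complex.exp (2*π*Complex.I*(f n))‖ ≤
      2*Δ/lam + 1 := by
    have hcard : ‖∑ n ∈ Finset.Ico (a+1) (b+1), Complex.exp (2*π*Complex.I*(f n))‖ ≤
        ((b - a : ℕ) : ℝ) := by
      calc ‖∑ n ∈ Finset.Ico (a+1) (b+1), Complex.exp (2*π*Complex.I*(f n))‖
          ≤ ∑ n ∈ Finset.Ico (a+1) (b+1), ‖Complex.exp (2*π*Complex.I*(f n))‖ :=
            norm_sum_le _ _
        _ = ∑ n ∈ Finset.Ico (a+1) (b+1), 1 := Finset.sum_congr rfl fun n _ => norm_ee _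
        _ = ((b - a : ℕ) : ℝ) := by
            rw [Finset.sum_const, Nat.card_Ico]
            simp [Nat.succ_sub_succ]
    refine hcard.trans ?_
    rcases le_or_gt b (a+1) with hba | hba
    · have : ((b - a : ℕ) : ℝ) ≤ 1 := by
        have : b - a ≤ 1 := by omega
        exact_mod_cast this
      have : (0:ℝ) ≤ 2*Δ/lam := by positivity
      linarith
    · have hPb : 1 ≤ b ∧ (k:ℝ) - Δ ≤ g b :=
        Nat.findGreatest_of_ne_zero hbdef.symm (by omega)
      have hnotPa1 : ¬(1 ≤ a+1 ∧ (k:ℝ) + Δ < g (((a+1:ℕ)):ℝ)) :=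
        ha_g (a+1) (by omega) (by omega)
      have hga1 : g ((a+1:ℕ):ℝ) ≤ (k:ℝ) + Δ := by
        push_neg at hnotPa1
        have := hnotPa1 (by omega)
        push_cast at this ⊢
        linarith
      have hab1r : ((a+1:ℕ):ℝ) < (b:ℝ) := by exact_mod_cast hba
      obtain ⟨ξ, hξmem, hξeq⟩ := exists_hasDerivAt_eq_slope g
        (fun x => δ*((δ-1)*x^(δ-2))) hab1r
        (fun x hx => by
          have hx1 : (0:ℝ) < x := by
            have : (1:ℝ) ≤ ((a+1:ℕ):ℝ) := by exact_mod_cast Nat.one_le_iff_ne_zero.mpr (by omega)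
            linarith [hx.1]
          exact (hg' x hx1).continuousAt.continuousWithinAt)
        (fun x hx => by
          have hx1 : (0:ℝ) < x := by
            have : (1:ℝ) ≤ ((a+1:ℕ):ℝ) := by exact_mod_cast Nat.one_le_iff_ne_zero.mpr (by omega)
            linarith [hx.1.le]
          exact hg' x hx1)
      have hξpos : (0:ℝ) < ξ := by
        have : (1:ℝ) ≤ ((a+1:ℕ):ℝ) := by exact_mod_cast Nat.one_le_iff_ne_zero.mpr (by omega)
        linarith [hξmem.1]
      have hξN : ξ ≤ (N:ℝ) := by
        have : (b:ℝ) ≤ (N:ℝ) := by exact_mod_cast hbN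
        linarith [hξmem.2]
      have hrpow : (N:ℝ)^(δ-2) ≤ ξ^(δ-2) :=
        Real.rpow_le_rpow_of_nonpos hξpos hξN (by linarith)
      have hdenom : (0:ℝ) < (b:ℝ) - ((a+1:ℕ):ℝ) := by linarith
      have hslope : g ((a+1:ℕ):ℝ) - g b = (δ*(1-δ)*ξ^(δ-2)) * ((b:ℝ) - ((a+1:ℕ):ℝ)) := by
        rw [eq_div_iff hdenom.ne'] at hξeq
        linear_combination hξeq
      have hgap : g ((a+1:ℕ):ℝ) - g b ≤ 2*Δ := by linarith [hPb.2]
      have hlower : lam * ((b:ℝ) - ((a+1:ℕ):ℝ)) ≤ g ((a+1:ℕ):ℝ) - g b := by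
        rw [hslope]
        have h0 : (0:ℝ) < δ*(1-δ) := by positivity
        have hll : lam ≤ δ*(1-δ)*ξ^(δ-2) := by
          rw [hlamdef]
          exact mul_le_mul_of_nonneg_left hrpow h0.le
        exact mul_le_mul_of_nonneg_right hll hdenom.le
      have hfin : (b:ℝ) - ((a+1:ℕ):ℝ) ≤ 2*Δ/lam := by
        rw [le_div_iff₀ hlampos]
        nlinarith
      have : ((b - a : ℕ) : ℝ) = (b:ℝ) - (a:ℝ) := by
        rw [Nat.cast_sub hab]
      rw [this]
      push_cast at hfin ⊢
      linarith
  -- combine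
  have hnorm : ‖∑ n ∈ Finset.Icc 1 N, Complex.exp (2*π*Complex.I*(f n))‖ ≤
      (2 + 1/Δ) + (2*Δ/lam + 1) + (2 + 1/Δ) := by
    rw [hsplit]
    refine (norm_add_le _ _).trans ?_
    refine (add_le_add_left (norm_add_le _ _) _).trans ?_
    exact add_le_add (add_le_add hS1 hS2) hS3
  -- rpow arithmetic
  have hmul1 : Δ * (N:ℝ)^(1-δ/2) = 1 := by
    rw [hΔdef, ← Real.rpow_add hN0, show δ/2-1+(1-δ/2) = 0 by ring, Real.rpow_zero]
  have hinvΔ : 1/Δ = (N:ℝ)^(1-δ/2) := by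
    rw [div_eq_iff hΔpos.ne']
    linarith [hmul1, mul_comm Δ ((N:ℝ)^(1-δ/2))]
  have hΔsplit : Δ = (N:ℝ)^(δ-2) * (N:ℝ)^(1-δ/2) := by
    rw [hΔdef, ← Real.rpow_add hN0, show δ-2+(1-δ/2) = δ/2-1 by ring]
  have hpow2 : (0:ℝ) < (N:ℝ)^(δ-2) := Real.rpow_pos_of_pos hN0 _
  have hΔlam : 2*Δ/lam = (2/(δ*(1-δ))) * (N:ℝ)^(1-δ/2) := by
    rw [hΔsplit, hlamdef]
    field_simp
  have h2div : (0:ℝ) ≤ 2/(1-δ) := by positivity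
  calc ‖∑ n ∈ Finset.Icc 1 N, Complex.exp (2*π*Complex.I*(f n))‖
      ≤ (2 + 1/Δ) + (2*Δ/lam + 1) + (2 + 1/Δ) := hnorm
    _ = 5 + 2*(1/Δ) + 2*Δ/lam := by ring
    _ = 5 + 2*(N:ℝ)^(1-δ/2) + (2/(δ*(1-δ))) * (N:ℝ)^(1-δ/2) := by rw [hinvΔ, hΔlam]
    _ ≤ (7 + 2/(δ*(1-δ)) + 2/(1-δ)) * (N:ℝ)^(1-δ/2) := by nlinarith
end

section
/- For every real h ≠ 0 there is the bound sup_{θ∈ℝ} |∑_{k=1}^{N} e^{2iπ(h log k + θk)}/k| ≤ 30(|h| + 1/|h|), uniformly in N ≥ 1. -/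
open Finset Complex Real

noncomputable def ff (t : ℝ) (x : ℝ) : ℂ :=
  Complex.exp ((t * Real.log x : ℝ) * Complex.I) * ((x⁻¹ : ℝ) : ℂ)

noncomputable def FF (t : ℝ) (x : ℝ) : ℂ :=
  Complex.exp ((t * Real.log x : ℝ) * Complex.I) * ((t : ℂ) * Complex.I)⁻¹

lemma hasDerivAt_phase (t : ℝ) {x : ℝ} (hx : 0 < x) :
    HasDerivAt (fun y : ℝ => Complex.exp ((t * Real.log y : ℝ) * Complex.I))
      (Complex.exp ((t * Real.log x : ℝ) * Complex.I) * (((t * x⁻¹ : ℝ) : ℂ) * Complex.I)) x := by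
  have h1 : HasDerivAt (fun y : ℝ => t * Real.log y) (t * x⁻¹) x :=
    (Real.hasDerivAt_log hx.ne').const_mul t
  have h3 := (h1.ofReal_comp).mul_const Complex.I
  exact h3.cexp

lemma hasDerivAt_ff (t : ℝ) {x : ℝ} (hx : 0 < x) :
    HasDerivAt (ff t)
      (Complex.exp ((t * Real.log x : ℝ) * Complex.I) * (((t * x⁻¹ : ℝ) : ℂ) * Complex.I) * ((x⁻¹ : ℝ) : ℂ)
        + Complex.exp ((t * Real.log x : ℝ) * Complex.I) * ((-(x^2)⁻¹ : ℝ) : ℂ)) x := by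
  have h5 : HasDerivAt (fun y : ℝ => ((y⁻¹ : ℝ) : ℂ)) ((-(x^2)⁻¹ : ℝ) : ℂ) x :=
    (hasDerivAt_inv hx.ne').ofReal_comp
  exact (hasDerivAt_phase t hx).mul h5

lemma norm_ff_deriv (t : ℝ) {x : ℝ} (hx : 1 ≤ x) :
    ‖Complex.exp ((t * Real.log x : ℝ) * Complex.I) * (((t * x⁻¹ : ℝ) : ℂ) * Complex.I) * ((x⁻¹ : ℝ) : ℂ)
        + Complex.exp ((t * Real.log x : ℝ) * Complex.I) * ((-(x^2)⁻¹ : ℝ) : ℂ)‖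
      ≤ (1 + |t|) / x^2 := by
  have hx0 : (0:ℝ) < x := lt_of_lt_of_le one_pos hx
  refine (norm_add_le _ _).trans ?_
  simp only [norm_mul, Complex.norm_exp_ofReal_mul_I, Complex.norm_I, Complex.norm_real,
    Real.norm_eq_abs, one_mul, mul_one]
  rw [_root_.abs_of_nonneg (inv_nonneg.2 hx0.le), abs_neg, _root_.abs_of_nonneg (inv_nonneg.2 (sq_nonneg x))]
  have h2 : x⁻¹ * x⁻¹ = (x^2)⁻¹ := by rw [← mul_inv]; ring_nf
  rw [div_eq_mul_inv, mul_assoc, h2]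
  nlinarith [inv_nonneg.2 (sq_nonneg x), abs_nonneg t]

lemma ff_lip (t : ℝ) {a x y : ℝ} (ha : 1 ≤ a)
    (hx : x ∈ Set.Icc a (a+1)) (hy : y ∈ Set.Icc a (a+1)) :
    ‖ff t y - ff t x‖ ≤ (1 + |t|) / a^2 * |y - x| := by
  have key := Convex.norm_image_sub_le_of_norm_hasDerivWithin_le
    (f := ff t)
    (f' := fun x => Complex.exp ((t * Real.log x : ℝ) * Complex.I) * (((t * x⁻¹ : ℝ) : ℂ) * Complex.I) * ((x⁻¹ : ℝ) : ℂ)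
        + Complex.exp ((t * Real.log x : ℝ) * Complex.I) * ((-(x^2)⁻¹ : ℝ) : ℂ))
    (C := (1 + |t|) / a^2) (s := Set.Icc a (a+1))
    (fun z hz => (hasDerivAt_ff t (lt_of_lt_of_le one_pos (ha.trans hz.1))).hasDerivWithinAt)
    (fun z hz => by
      refine (norm_ff_deriv t (ha.trans hz.1)).trans ?_
      apply div_le_div_of_nonneg_left (by positivity) (by positivity)
      nlinarith [hz.1, ha])
    (convex_Icc a (a+1)) hx hy
  simpa [Real.norm_eq_abs] using key

lemma hasDerivAt_FF {t : ℝ} (ht : t ≠ 0) {x : ℝ} (hx : 0 < x) :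
    HasDerivAt (FF t) (ff t x) x := by
  have h := (hasDerivAt_phase t hx).mul_const ((t : ℂ) * Complex.I)⁻¹
  refine h.congr_deriv ?_
  unfold ff
  have htC : (t : ℂ) ≠ 0 := Complex.ofReal_ne_zero.2 ht
  have hxC : (x : ℂ) ≠ 0 := Complex.ofReal_ne_zero.2 hx.ne'
  push_cast
  field_simp

lemma norm_ff (t : ℝ) {x : ℝ} (hx : 0 ≤ x) : ‖ff t x‖ = x⁻¹ := by
  unfold ff
  rw [norm_mul, Complex.norm_exp_ofReal_mul_I, one_mul, Complex.norm_real,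
    Real.norm_eq_abs, _root_.abs_of_nonneg (inv_nonneg.2 hx)]

lemma norm_FF {t : ℝ} (ht : t ≠ 0) (x : ℝ) : ‖FF t x‖ = |t|⁻¹ := by
  unfold FF
  rw [norm_mul, Complex.norm_exp_ofReal_mul_I, one_mul, norm_inv, norm_mul,
    Complex.norm_I, mul_one, Complex.norm_real, Real.norm_eq_abs]

lemma step_err {t : ℝ} (ht : t ≠ 0) {a : ℝ} (ha : 1 ≤ a) :
    ‖ff t (a+1) - (FF t (a+1) - FF t a)‖ ≤ (1 + |t|) / a^2 := by
  have ha0 : (0:ℝ) < a := lt_of_lt_of_le one_pos ha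
  have hG : ∀ z ∈ Set.Icc a (a+1),
      HasDerivWithinAt (fun x : ℝ => FF t x - ff t (a+1) * (x : ℂ))
        (ff t z - ff t (a+1)) (Set.Icc a (a+1)) z := by
    intro z hz
    have h1 := hasDerivAt_FF ht (lt_of_lt_of_le ha0 hz.1)
    have h2 : HasDerivAt (fun x : ℝ => ff t (a+1) * (x : ℂ)) (ff t (a+1)) z := by
      simpa using ((hasDerivAt_id z).ofReal_comp).const_mul (ff t (a+1))
    exact (h1.sub h2).hasDerivWithinAt
  have key := Convex.norm_image_sub_le_of_norm_hasDerivWithin_le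
    (C := (1 + |t|) / a^2) hG
    (fun z hz => by
      obtain ⟨hz1, hz2⟩ := hz
      have := ff_lip t ha (a := a) (x := a+1) (y := z)
        (by constructor <;> linarith) ⟨hz1, hz2⟩
      refine this.trans ?_
      have h1 : |z - (a+1)| ≤ 1 := by
        rw [abs_le]; constructor <;> linarith
      nlinarith [div_nonneg (by positivity : (0:ℝ) ≤ 1 + |t|) (sq_nonneg a)])
    (convex_Icc a (a+1)) (Set.left_mem_Icc.2 (by linarith)) (Set.right_mem_Icc.2 (by linarith))
  have e : (FF t (a+1) - ff t (a+1) * ((a+1 : ℝ) : ℂ)) - (FF t a - ff t (a+1) * (a : ℂ))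
      = -(ff t (a+1) - (FF t (a+1) - FF t a)) := by push_cast; ring
  rw [e, norm_neg] at key
  refine key.trans ?_
  rw [show a + 1 - a = (1:ℝ) by ring]
  simp

lemma head_aux {t : ℝ} (ht : t ≠ 0) : ∀ K : ℕ, 1 ≤ K →
    ‖(∑ k ∈ Ioc 0 K, ff t k) - FF t K‖ ≤ 1 + |t|⁻¹ + (1+|t|) * (2 - 2/(K:ℝ)) := by
  intro K hK'
  induction K, hK' using Nat.le_induction with
  | base =>
    have : Finset.Ioc 0 1 = {1} := rfl
    rw [this]
    simp only [Finset.sum_singleton, Nat.cast_one]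
    refine (norm_sub_le _ _).trans ?_
    rw [norm_ff t (by norm_num), norm_FF ht]
    norm_num
  | succ K hK ih =>
    rw [Finset.sum_Ioc_succ_top (Nat.zero_le K)]
    have hcast : ((K+1 : ℕ) : ℝ) = (K : ℝ) + 1 := by push_cast; ring
    have hK1 : (1:ℝ) ≤ (K:ℝ) := by exact_mod_cast hK
    have e : (∑ k ∈ Ioc 0 K, ff t k) + ff t ((K+1:ℕ):ℝ) - FF t ((K+1:ℕ):ℝ)
        = ((∑ k ∈ Ioc 0 K, ff t k) - FF t (K:ℝ))
          + (ff t ((K:ℝ)+1) - (FF t ((K:ℝ)+1) - FF t (K:ℝ))) := by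
      rw [hcast]; ring
    rw [e]
    refine (norm_add_le _ _).trans ?_
    refine (add_le_add ih (step_err ht hK1)).trans ?_
    rw [hcast]
    have harith : (1+|t|) * (2 - 2/(K:ℝ)) + (1+|t|) / (K:ℝ)^2
        ≤ (1+|t|) * (2 - 2/((K:ℝ)+1)) := by
      have h2 : (1:ℝ)/(K:ℝ)^2 ≤ 2/(K:ℝ) - 2/((K:ℝ)+1) := by
        rw [div_sub_div _ _ (by positivity) (by positivity), div_le_div_iff₀ (by positivity) (by positivity)]
        nlinarith
      have ht0 : (0:ℝ) ≤ 1 + |t| := by positivity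
      have h5 : (1+|t|)/(K:ℝ)^2 = (1+|t|) * (1/(K:ℝ)^2) := by ring
      rw [h5]
      nlinarith [mul_le_mul_of_nonneg_left h2 ht0]
    linarith

lemma head_bound {t : ℝ} (ht : t ≠ 0) (K : ℕ) (hK : 1 ≤ K) :
    ‖∑ k ∈ Ioc 0 K, ff t k‖ ≤ 1 + 2*|t|⁻¹ + 2*(1+|t|) := by
  have h1 := head_aux ht K hK
  have h2 : ‖∑ k ∈ Ioc 0 K, ff t k‖ ≤ ‖(∑ k ∈ Ioc 0 K, ff t k) - FF t K‖ + ‖FF t (K:ℝ)‖ := by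
    have := norm_sub_le ((∑ k ∈ Ioc 0 K, ff t k) - FF t (K:ℝ)) (-(FF t (K:ℝ)))
    simpa using this
  rw [norm_FF ht] at h2
  have hK1 : (1:ℝ) ≤ (K:ℝ) := by exact_mod_cast hK
  have h3 : (1+|t|) * (2 - 2/(K:ℝ)) ≤ (1+|t|) * 2 := by
    have : (0:ℝ) < (K:ℝ) := by linarith
    have h4 : (0:ℝ) ≤ 2/(K:ℝ) := by positivity
    nlinarith [abs_nonneg t]
  linarith

lemma abel_identity (a g : ℕ → ℂ) (K : ℕ) : ∀ N : ℕ,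
    ∑ k ∈ Ioc K N, a k * g k
      = (∑ k ∈ Ioc K N, a k) * g (N+1)
        - ∑ k ∈ Ioc K N, (∑ j ∈ Ioc K k, a j) * (g (k+1) - g k) := by
  intro N
  induction N with
  | zero =>
    have : Finset.Ioc K 0 = ∅ := by
      apply Finset.Ioc_eq_empty; omega
    simp [this]
  | succ N ih =>
    by_cases hKN : K ≤ N
    · rw [Finset.sum_Ioc_succ_top hKN, Finset.sum_Ioc_succ_top hKN,
        Finset.sum_Ioc_succ_top hKN (f := fun k => (∑ j ∈ Ioc K k, a j) * (g (k+1) - g k)),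
        Finset.sum_Ioc_succ_top hKN (f := a), ih]
      ring
    · have : Finset.Ioc K (N+1) = ∅ := by
        apply Finset.Ioc_eq_empty; omega
      simp [this]

lemma abel_bound (a g : ℕ → ℂ) (K N : ℕ) (C : ℝ)
    (hC : ∀ M, ‖∑ k ∈ Ioc K M, a k‖ ≤ C) :
    ‖∑ k ∈ Ioc K N, a k * g k‖
      ≤ C * ‖g (N+1)‖ + C * ∑ k ∈ Ioc K N, ‖g (k+1) - g k‖ := by
  rw [abel_identity]
  refine (norm_sub_le _ _).trans ?_
  gcongr ?_ + ?_
  · rw [norm_mul]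
    exact mul_le_mul_of_nonneg_right (hC N) (norm_nonneg _)
  · refine (norm_sum_le _ _).trans ?_
    rw [Finset.mul_sum]
    refine Finset.sum_le_sum fun k _ => ?_
    rw [norm_mul]
    exact mul_le_mul_of_nonneg_right (hC k) (norm_nonneg _)

lemma geom_bound (w : ℂ) (hw : ‖w‖ = 1) (hw1 : w ≠ 1) (K M : ℕ) :
    ‖∑ k ∈ Ioc K M, w^k‖ ≤ 2 / ‖w - 1‖ := by
  have hw0 : w - 1 ≠ 0 := sub_ne_zero.2 hw1
  rcases le_or_gt M K with hMK | hKM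
  · have : Finset.Ioc K M = ∅ := by apply Finset.Ioc_eq_empty; omega
    rw [this]
    simp [div_nonneg, norm_nonneg]
  · have key : ∀ M, K ≤ M → (w - 1) * ∑ k ∈ Ioc K M, w^k = w^(M+1) - w^(K+1) := by
      intro M hM
      induction M, hM using Nat.le_induction with
      | base => simp
      | succ M hM ih =>
        rw [Finset.sum_Ioc_succ_top (by omega), mul_add, ih]
        ring
    have hsum : ∑ k ∈ Ioc K M, w^k = (w^(M+1) - w^(K+1)) / (w - 1) := by
      rw [eq_div_iff hw0, mul_comm, key M hKM.le]
    rw [hsum, norm_div]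
    have h2 : ‖w^(M+1) - w^(K+1)‖ ≤ 2 := by
      refine (norm_sub_le _ _).trans ?_
      rw [norm_pow, norm_pow, hw, one_pow, one_pow]
      norm_num
    gcongr


lemma sum_invsq_tail {K : ℕ} (hK : 1 ≤ K) (N : ℕ) :
    ∑ k ∈ Ioc K N, ((k:ℝ)^2)⁻¹ ≤ (K:ℝ)⁻¹ := by
  have key : ∀ N, K ≤ N → ∑ k ∈ Ioc K N, ((k:ℝ)^2)⁻¹ ≤ (K:ℝ)⁻¹ - (N:ℝ)⁻¹ := by
    intro N hN
    induction N, hN using Nat.le_induction with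
    | base => simp
    | succ N hN ih =>
      rw [Finset.sum_Ioc_succ_top (by omega)]
      have hN1 : (1:ℝ) ≤ (N:ℝ) := by exact_mod_cast hK.trans hN
      have hstep : (((N:ℝ)+1)^2)⁻¹ ≤ (N:ℝ)⁻¹ - ((N:ℝ)+1)⁻¹ := by
        have e : (N:ℝ)⁻¹ - ((N:ℝ)+1)⁻¹ = ((N:ℝ)*((N:ℝ)+1))⁻¹ := by
          field_simp
          ring
        rw [e]
        apply inv_anti₀ (by positivity)
        nlinarith
      push_cast at ih ⊢
      linarith
  rcases le_or_gt K N with hKN | hNK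
  · refine (key N hKN).trans ?_
    have h0 : (0:ℝ) ≤ (N:ℝ)⁻¹ := by positivity
    linarith
  · have : Finset.Ioc K N = ∅ := by apply Finset.Ioc_eq_empty; omega
    rw [this]
    simp [inv_nonneg]

lemma norm_exp_mul_I_sub_one_le (x : ℝ) : ‖Complex.exp ((x:ℂ) * Complex.I) - 1‖ ≤ |x| := by
  have key := Convex.norm_image_sub_le_of_norm_hasDerivWithin_le
    (f := fun y : ℝ => Complex.exp ((y:ℂ) * Complex.I))
    (f' := fun y : ℝ => Complex.exp ((y:ℂ) * Complex.I) * Complex.I)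
    (C := 1) (s := Set.univ)
    (fun z _ => by
      have h := (((hasDerivAt_id z).ofReal_comp).mul_const Complex.I).cexp
      have h2 : HasDerivAt (fun y : ℝ => Complex.exp ((y:ℂ) * Complex.I))
          (Complex.exp ((z:ℂ) * Complex.I) * Complex.I) z := by
        simpa using h
      exact h2.hasDerivWithinAt)
    (fun z _ => by
      rw [norm_mul, Complex.norm_I, mul_one]
      have : ((z:ℂ) * Complex.I) = ((z:ℝ):ℂ) * Complex.I := rfl
      rw [Complex.norm_exp_ofReal_mul_I])
    convex_univ (Set.mem_univ 0) (Set.mem_univ x)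
  simpa [Real.norm_eq_abs] using key

lemma norm_exp_mul_I_sub_one (x : ℝ) :
    ‖Complex.exp ((x:ℂ) * Complex.I) - 1‖ = 2 * |Real.sin (x/2)| := by
  have e : Complex.exp ((x:ℂ) * Complex.I) - 1
      = Complex.exp (((x/2:ℝ):ℂ) * Complex.I) * (2 * (Real.sin (x/2) : ℂ) * Complex.I) := by
    rw [Complex.exp_mul_I, Complex.exp_mul_I]
    have hc : Complex.cos ((x:ℝ):ℂ) = ((Real.cos x : ℝ) : ℂ) := (Complex.ofReal_cos x).symm
    have hs : Complex.sin ((x:ℝ):ℂ) = ((Real.sin x : ℝ) : ℂ) := (Complex.ofReal_sin x).symm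
    have hc2 : Complex.cos (((x/2:ℝ)):ℂ) = ((Real.cos (x/2) : ℝ) : ℂ) := (Complex.ofReal_cos _).symm
    have hs2 : Complex.sin (((x/2:ℝ)):ℂ) = ((Real.sin (x/2) : ℝ) : ℂ) := (Complex.ofReal_sin _).symm
    rw [hc, hs, hc2, hs2]
    have hdc : Real.cos x = 1 - 2 * Real.sin (x/2)^2 := by
      have h1 := Real.cos_two_mul (x/2)
      rw [show 2*(x/2) = x by ring] at h1
      nlinarith [Real.sin_sq_add_cos_sq (x/2)]
    have hds : Real.sin x = 2 * Real.sin (x/2) * Real.cos (x/2) := by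
      have := Real.sin_two_mul (x/2)
      rw [show 2 * (x/2) = x by ring] at this
      linarith
    rw [hdc, hds]
    push_cast
    ring_nf
    simp [Complex.I_sq]
    ring
  rw [e, norm_mul, Complex.norm_exp_ofReal_mul_I, one_mul, norm_mul, norm_mul,
    Complex.norm_I, mul_one, Complex.norm_real, Real.norm_eq_abs]
  norm_num

lemma term_eq (h θ : ℝ) (k : ℕ) :
    Complex.exp (2 * Real.pi * Complex.I * ((h * Real.log k + θ * k : ℝ) : ℂ)) / (k : ℂ)
      = Complex.exp (((2*Real.pi*(θ - round θ) * k : ℝ) : ℂ) * Complex.I)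
          * ff (2*Real.pi*h) k := by
  unfold ff
  have hsplit : (2 * (Real.pi:ℂ) * Complex.I * ((h * Real.log k + θ * k : ℝ) : ℂ))
      = ((2*Real.pi*(θ - round θ) * k : ℝ) : ℂ) * Complex.I
        + (((2*Real.pi*h * Real.log k : ℝ) : ℂ) * Complex.I
        + ((round θ * k : ℤ) : ℂ) * (2 * Real.pi * Complex.I)) := by
    push_cast
    ring
  rw [hsplit, Complex.exp_add, Complex.exp_add, Complex.exp_int_mul_two_pi_mul_I, mul_one,
    div_eq_mul_inv]
  have : ((((k:ℝ))⁻¹ : ℝ) : ℂ) = ((k : ℂ))⁻¹ := by push_cast; ring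
  rw [this]
  ring

lemma final_num (h : ℝ) (hh : h ≠ 0) :
    3*(2*Real.pi*|h|) + 2*(2*Real.pi*|h|)⁻¹ + 5 + 2*Real.pi ≤ 30*(|h| + 1/|h|) := by
  have ha : 0 < |h| := abs_pos.2 hh
  have hainv : 0 < |h|⁻¹ := inv_pos.2 ha
  have hb : |h| * |h|⁻¹ = 1 := mul_inv_cancel₀ ha.ne'
  have hπ1 : Real.pi < 3.15 := by
    have := Real.pi_lt_d2
    linarith
  have hπ2 : (3:ℝ) < Real.pi := Real.pi_gt_three
  have e : 2*(2*Real.pi*|h|)⁻¹ = Real.pi⁻¹ * |h|⁻¹ := by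
    rw [mul_inv, mul_inv]
    field_simp
  rw [e, one_div]
  have hp3 : Real.pi⁻¹ ≤ 3⁻¹ := by
    apply inv_anti₀ (by norm_num) hπ2.le
  have hp3' : Real.pi⁻¹ * |h|⁻¹ ≤ 3⁻¹ * |h|⁻¹ :=
    mul_le_mul_of_nonneg_right hp3 hainv.le
  nlinarith [mul_nonneg (sq_nonneg (|h| - 1)) hainv.le, sq_nonneg (|h| - 1),
    mul_le_mul_of_nonneg_right hπ1.le ha.le]

/-- Hlawka's inequality: `|∑_{k=1}^N e^{2iπ(h log k + θk)}/k| ≤ 30(|h| + 1/|h|)`. -/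
theorem stmt_16 (h : ℝ) (hh : h ≠ 0) :
    ∀ N : ℕ, 1 ≤ N → ∀ θ : ℝ,
      ‖∑ k ∈ Finset.Icc 1 N,
          Complex.exp (2 * Real.pi * Complex.I * ((h * Real.log k + θ * k : ℝ) : ℂ)) / (k : ℂ)‖
        ≤ 30 * (|h| + 1 / |h|) := by
  intro N hN θ
  have hπ := Real.pi_pos
  set t : ℝ := 2*Real.pi*h with htdef
  have ht : t ≠ 0 := by rw [htdef]; exact mul_ne_zero (by positivity) hh
  have habs_t : |t| = 2*Real.pi*|h| := by
    rw [htdef, abs_mul, abs_of_pos (by positivity : (0:ℝ) < 2*Real.pi)]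
  set θ' : ℝ := θ - round θ with hθ'def
  have hθ'le : |θ'| ≤ 1/2 := abs_sub_round θ
  set c : ℝ := 2*Real.pi*θ' with hcdef
  have hIcc : Finset.Icc 1 N = Finset.Ioc 0 N := by
    ext x; simp [Finset.mem_Icc, Finset.mem_Ioc]; omega
  have hrw : ∑ k ∈ Finset.Icc 1 N,
      Complex.exp (2 * Real.pi * Complex.I * ((h * Real.log k + θ * k : ℝ) : ℂ)) / (k : ℂ)
      = ∑ k ∈ Finset.Ioc 0 N, Complex.exp (((c * k : ℝ):ℂ) * Complex.I) * ff t k := by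
    rw [hIcc]
    exact Finset.sum_congr rfl (fun k _ => term_eq h θ k)
  rw [hrw]
  have hB : ∀ S : ℂ, ‖S‖ ≤ 3*|t| + 2*|t|⁻¹ + 5 + 2*Real.pi → ‖S‖ ≤ 30*(|h|+1/|h|) := by
    intro S hS
    refine hS.trans ?_
    rw [habs_t]
    exact final_num h hh
  apply hB
  by_cases hθ0 : θ' = 0
  · have hz : ∀ k : ℕ, Complex.exp (((c * k : ℝ):ℂ) * Complex.I) = 1 := by
      intro k
      rw [hcdef, hθ0]
      norm_num
    simp_rw [hz, one_mul]
    refine (head_bound ht N hN).trans ?_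
    have h0t : 0 ≤ |t| := abs_nonneg t
    have h0ti : 0 ≤ |t|⁻¹ := by positivity
    linarith
  · have hθ'pos : 0 < |θ'| := abs_pos.2 hθ0
    have hX2 : (2:ℝ) ≤ |θ'|⁻¹ := by
      rw [show (2:ℝ) = ((1:ℝ)/2)⁻¹ by norm_num]
      exact inv_anti₀ hθ'pos hθ'le
    have hXpos : 0 < |θ'|⁻¹ := by positivity
    set K : ℕ := min N (Nat.floor |θ'|⁻¹) with hKdef
    have hflo1 : 1 ≤ Nat.floor |θ'|⁻¹ :=
      Nat.le_floor (by push_cast; linarith)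
    have hK1 : 1 ≤ K := le_min hN hflo1
    have hKN : K ≤ N := min_le_left _ _
    have hK1R : (1:ℝ) ≤ (K:ℝ) := by exact_mod_cast hK1
    have hKX : (K:ℝ) ≤ |θ'|⁻¹ := by
      calc (K:ℝ) ≤ (Nat.floor |θ'|⁻¹ : ℝ) := by exact_mod_cast min_le_right N _
        _ ≤ |θ'|⁻¹ := Nat.floor_le hXpos.le
    rw [← Finset.sum_Ioc_consecutive _ (Nat.zero_le K) hKN]
    refine (norm_add_le _ _).trans ?_
    have hc_abs : |c| = 2*Real.pi*|θ'| := by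
      rw [hcdef, abs_mul, abs_of_pos (by positivity : (0:ℝ) < 2*Real.pi)]
    have head_le : ‖∑ k ∈ Finset.Ioc 0 K, Complex.exp (((c * k : ℝ):ℂ) * Complex.I) * ff t k‖
        ≤ (1 + 2*|t|⁻¹ + 2*(1+|t|)) + 2*Real.pi := by
      have e1 : ∀ k ∈ Finset.Ioc 0 K, Complex.exp (((c * k : ℝ):ℂ) * Complex.I) * ff t k
          = ff t k + (Complex.exp (((c * k : ℝ):ℂ) * Complex.I) - 1) * ff t k := by
        intro k _; ring
      rw [Finset.sum_congr rfl e1, Finset.sum_add_distrib]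
      refine (norm_add_le _ _).trans ?_
      gcongr ?_ + ?_
      · exact head_bound ht K hK1
      · refine (norm_sum_le _ _).trans ?_
        have e2 : ∀ k ∈ Finset.Ioc 0 K,
            ‖(Complex.exp (((c * k : ℝ):ℂ) * Complex.I) - 1) * ff t k‖ ≤ |c| := by
          intro k hk
          have hk1 : 1 ≤ k := (Finset.mem_Ioc.1 hk).1
          have hkR : (1:ℝ) ≤ (k:ℝ) := by exact_mod_cast hk1
          rw [norm_mul, norm_ff t (by positivity)]
          calc ‖Complex.exp (((c * k : ℝ):ℂ) * Complex.I) - 1‖ * ((k:ℝ))⁻¹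
              ≤ |c * (k:ℝ)| * ((k:ℝ))⁻¹ := by
                gcongr
                exact norm_exp_mul_I_sub_one_le _
            _ = |c| * ((k:ℝ) * ((k:ℝ))⁻¹) := by
                rw [abs_mul, _root_.abs_of_nonneg (by linarith : (0:ℝ) ≤ (k:ℝ))]; ring
            _ = |c| := by rw [mul_inv_cancel₀ (by linarith : (k:ℝ) ≠ 0), mul_one]
        refine (Finset.sum_le_sum e2).trans ?_
        rw [Finset.sum_const, Nat.card_Ioc, Nat.sub_zero, nsmul_eq_mul]
        rw [hc_abs]
        calc (K:ℝ) * (2*Real.pi*|θ'|) ≤ |θ'|⁻¹ * (2*Real.pi*|θ'|) := by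
              gcongr
          _ = 2*Real.pi := by field_simp
    set w : ℂ := Complex.exp ((c:ℂ) * Complex.I) with hwdef
    have hwnorm : ‖w‖ = 1 := Complex.norm_exp_ofReal_mul_I c
    have hw1norm : 4*|θ'| ≤ ‖w - 1‖ := by
      rw [hwdef, norm_exp_mul_I_sub_one c]
      have hc2 : c / 2 = Real.pi * θ' := by rw [hcdef]; ring
      rw [hc2]
      have habs : |Real.pi * θ'| ≤ Real.pi/2 := by
        rw [abs_mul, abs_of_pos hπ]
        nlinarith
      have hjord := Real.mul_abs_le_abs_sin habs
      rw [abs_mul, abs_of_pos hπ] at hjord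
      have e3 : 2/Real.pi * (Real.pi * |θ'|) = 2 * |θ'| := by field_simp
      rw [e3] at hjord
      linarith
    have hw1 : w ≠ 1 := by
      intro hcon
      rw [hcon] at hw1norm
      simp at hw1norm
      linarith
    have hwk : ∀ k : ℕ, Complex.exp (((c * k : ℝ):ℂ) * Complex.I) = w^k := by
      intro k
      rw [hwdef, ← Complex.exp_nat_mul]
      congr 1
      push_cast
      ring
    have tail_le : ‖∑ k ∈ Finset.Ioc K N, Complex.exp (((c*k:ℝ):ℂ) * Complex.I) * ff t k‖
        ≤ 2 + |t| := by
      rcases le_or_gt N (Nat.floor |θ'|⁻¹) with hcase | hcase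
      · have hKN' : K = N := min_eq_left hcase
        rw [hKN', Finset.Ioc_self]
        simp only [Finset.sum_empty, norm_zero]
        positivity
      · have hKfl : K = Nat.floor |θ'|⁻¹ := min_eq_right hcase.le
        have hKlow : |θ'|⁻¹ - 1 < (K:ℝ) := by
          rw [hKfl]
          exact_mod_cast Nat.sub_one_lt_floor _
        have hKhalf : |θ'|⁻¹/2 ≤ (K:ℝ) := by linarith
        have hKRpos : (0:ℝ) < (K:ℝ) := by linarith
        simp_rw [hwk]
        have habel := abel_bound (fun k => w^k) (fun k => ff t k) K N (2/‖w-1‖)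
          (fun M => geom_bound w hwnorm hw1 K M)
        refine habel.trans ?_
        have hwpos : (0:ℝ) < ‖w - 1‖ := by linarith [mul_pos (by norm_num : (0:ℝ) < 4) hθ'pos]
        have hC : 2/‖w-1‖ ≤ |θ'|⁻¹/2 := by
          calc 2/‖w-1‖ ≤ 2/(4*|θ'|) :=
                div_le_div_of_nonneg_left (by norm_num) (by positivity) hw1norm
            _ = |θ'|⁻¹/2 := by field_simp; ring
        have hCpos : (0:ℝ) ≤ 2/‖w-1‖ := by positivity
        have hgN : ‖ff t ((N+1 : ℕ):ℝ)‖ ≤ (K:ℝ)⁻¹ := by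
          rw [norm_ff t (by positivity)]
          apply inv_anti₀ hKRpos
          push_cast
          have hKNR : (K:ℝ) ≤ (N:ℝ) := by exact_mod_cast hKN
          linarith
        have hvar : ∑ k ∈ Finset.Ioc K N, ‖ff t ((k+1:ℕ):ℝ) - ff t (k:ℝ)‖
            ≤ (1+|t|) * (K:ℝ)⁻¹ := by
          have e4 : ∀ k ∈ Finset.Ioc K N, ‖ff t ((k+1:ℕ):ℝ) - ff t (k:ℝ)‖
              ≤ (1+|t|) * ((k:ℝ)^2)⁻¹ := by
            intro k hk
            have hk1 : 1 ≤ k := hK1.trans (le_of_lt (Finset.mem_Ioc.1 hk).1)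
            have hkR : (1:ℝ) ≤ (k:ℝ) := by exact_mod_cast hk1
            have hlip := ff_lip t hkR (a := (k:ℝ)) (x := (k:ℝ)) (y := (k:ℝ)+1)
              ⟨le_refl _, by linarith⟩ ⟨by linarith, le_refl _⟩
            have ecast : ((k+1:ℕ):ℝ) = (k:ℝ)+1 := by push_cast; ring
            rw [ecast]
            refine hlip.trans ?_
            rw [show (k:ℝ)+1-(k:ℝ) = 1 by ring, abs_one, mul_one, div_eq_mul_inv]
          refine (Finset.sum_le_sum e4).trans ?_
          rw [← Finset.mul_sum]
          gcongr
          exact sum_invsq_tail hK1 N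
        have hone : (|θ'|⁻¹/2) * (K:ℝ)⁻¹ ≤ 1 := by
          calc (|θ'|⁻¹/2) * (K:ℝ)⁻¹ ≤ (K:ℝ) * (K:ℝ)⁻¹ := by gcongr
            _ = 1 := mul_inv_cancel₀ hKRpos.ne'
        have t1 : 2/‖w-1‖ * ‖ff t ((N+1:ℕ):ℝ)‖ ≤ 1 := by
          calc 2/‖w-1‖ * ‖ff t ((N+1:ℕ):ℝ)‖ ≤ (|θ'|⁻¹/2) * (K:ℝ)⁻¹ :=
                mul_le_mul hC hgN (norm_nonneg _) (by positivity)
            _ ≤ 1 := hone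
        have t2 : 2/‖w-1‖ * ∑ k ∈ Finset.Ioc K N, ‖ff t ((k+1:ℕ):ℝ) - ff t (k:ℝ)‖
            ≤ 1 + |t| := by
          calc 2/‖w-1‖ * ∑ k ∈ Finset.Ioc K N, ‖ff t ((k+1:ℕ):ℝ) - ff t (k:ℝ)‖
              ≤ (|θ'|⁻¹/2) * ((1+|t|) * (K:ℝ)⁻¹) := by
                refine mul_le_mul hC hvar ?_ (by positivity)
                exact Finset.sum_nonneg fun k _ => norm_nonneg _
            _ = (1+|t|) * ((|θ'|⁻¹/2) * (K:ℝ)⁻¹) := by ring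
            _ ≤ (1+|t|) * 1 := by
                gcongr
            _ = 1 + |t| := by ring
        linarith
    refine (add_le_add head_le tail_le).trans ?_
    linarith
end
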